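/- Let v^s_m := (∂_x^m v^top)(0, t_1, t_2, …) denote the restriction to t_0 = 0 of the m-th x-derivative of the topological solution of the Riemann hierarchy. Then for every m ≥ 1, v^s_m = Σ_{μ ∈ Y_{m-1}} ((m-1+ℓ(μ))! / ∏_{j≥1}(j+1)!^{m_j(μ)}) · t_{μ+1} / (m(μ)!·(1-t_1)^{m+ℓ(μ)}), where the sum is over partitions μ of weight m-1 and t_{μ+1} := t_{μ_1+1}⋯t_{μ_{ℓ(μ)}+1}. -/

import Mathlib

noncomputable section
open scoped BigOperators

/-- `m(μ)! = ∏_j m_j(μ)!` where `m_j(μ)` is the multiplicity of `j` in `μ`. -/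
def mFact (μ : Multiset ℕ) : ℚ := ∏ j ∈ μ.toFinset, ((μ.count j).factorial : ℚ)

/-- The Lagrange number `L(μ)` of a partition (multiset) `μ`. -/
def LagrangeL (μ : Multiset ℕ) : ℚ :=
  (-1 : ℚ) ^ Multiset.card μ * ((μ.sum + Multiset.card μ).factorial : ℚ) /
    (mFact μ * (μ.map fun j => ((j + 1).factorial : ℚ)).prod)
/-- The topological solution `v^top` of the Riemann hierarchy, as a formal power
series in `t_0, t_1, t_2, …`: `v^top = Σ_{k≥1} (1/k) Σ_{p_1+⋯+p_k=k-1} ∏ t_{p_i}/p_i!`,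
written coefficientwise. -/
def vtop : MvPowerSeries ℕ ℂ := fun m =>
  if 1 ≤ (m.sum fun _ n => n) ∧ (m.sum fun i n => i * n) + 1 = (m.sum fun _ n => n) then
    (((m.sum fun _ n => n) - 1).factorial : ℂ) /
      (m.prod fun i n => ((n.factorial : ℂ) * (i.factorial : ℂ) ^ n))
  else 0

/-- Partial derivative `∂/∂t_i` on formal power series in `t_0, t_1, …`. -/
def pd (i : ℕ) (f : MvPowerSeries ℕ ℂ) : MvPowerSeries ℕ ℂ := fun m =>
  ((m i : ℂ) + 1) * MvPowerSeries.coeff (m + Finsupp.single i 1) f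

/-- Restriction `t_0 = 0` of a formal power series. -/
def setZero (f : MvPowerSeries ℕ ℂ) : MvPowerSeries ℕ ℂ := fun m =>
  if m 0 = 0 then MvPowerSeries.coeff m f else 0

/-- `v^s_m := (∂_x^m v^top)|_{t_0=0}`, with `x = t_0`. -/
def vs (m : ℕ) : MvPowerSeries ℕ ℂ := setZero ((pd 0)^[m] vtop)

/-- The monomial `t_{μ+1} = ∏_{i ∈ μ} t_{i+1}` indexed by a multiset `μ`. -/
def tmon (μ : Multiset ℕ) : MvPowerSeries ℕ ℂ :=
  (μ.map fun i => (MvPowerSeries.X (i + 1) : MvPowerSeries ℕ ℂ)).prod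

/-- The monomial `v^s_{μ+1} = ∏_{i ∈ μ} v^s_{i+1}` indexed by a multiset `μ`. -/
def vsmon (μ : Multiset ℕ) : MvPowerSeries ℕ ℂ := (μ.map fun i => vs (i + 1)).prod

-- ===== auxiliary lemmas =====
open scoped Classical in
/-- `(1 - X 1)^{-(N+1)}` as an explicit series. -/
def Sser (N : ℕ) : MvPowerSeries ℕ ℂ := fun e =>
  if ∀ i ∈ e.support, i = 1 then ((N + e 1).choose (e 1) : ℂ) else 0

lemma coeff_eq (f : MvPowerSeries ℕ ℂ) (e : ℕ →₀ ℕ) : MvPowerSeries.coeff e f = f e := rfl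

lemma sub_support (e d : ℕ →₀ ℕ) (h : ∀ i ∈ e.support, i = 1) :
    ∀ i ∈ (e - d).support, i = 1 := by
  intro i hi
  apply h
  rw [Finsupp.mem_support_iff] at hi ⊢
  intro h0
  apply hi
  rw [Finsupp.tsub_apply, h0]
  simp

lemma sub_support' (e : ℕ →₀ ℕ) (k : ℕ) (h : ¬ ∀ i ∈ e.support, i = 1) :
    ¬ ∀ i ∈ (e - Finsupp.single 1 k).support, i = 1 := by
  push_neg at h ⊢
  obtain ⟨i, hi, hne⟩ := h
  refine ⟨i, ?_, hne⟩
  rw [Finsupp.mem_support_iff] at hi ⊢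
  rwa [Finsupp.tsub_apply, Finsupp.single_eq_of_ne' (Ne.symm hne), Nat.sub_zero]

lemma one_sub_X_mul_Sser (N : ℕ) :
    (1 - MvPowerSeries.X 1 : MvPowerSeries ℕ ℂ) * Sser (N + 1) = Sser N := by
  classical
  apply MvPowerSeries.ext
  intro e
  rw [sub_mul, one_mul, map_sub, MvPowerSeries.X, MvPowerSeries.coeff_monomial_mul]
  simp only [coeff_eq]
  have hsingle : Finsupp.single (1:ℕ) 1 ≤ e ↔ 1 ≤ e 1 := Finsupp.single_le_iff
  by_cases hsupp : ∀ i ∈ e.support, i = 1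
  · by_cases hr : 1 ≤ e 1
    · rw [if_pos (hsingle.mpr hr)]
      obtain ⟨r, hr'⟩ : ∃ r, e 1 = r + 1 := ⟨e 1 - 1, by omega⟩
      have h1 : (e - Finsupp.single 1 1 : ℕ →₀ ℕ) 1 = r := by
        rw [Finsupp.tsub_apply, hr']; simp
      simp only [Sser, coeff_eq, if_pos hsupp, if_pos (sub_support e _ hsupp), one_mul, h1, hr']
      have hch : (N + 1 + (r + 1)).choose (r + 1)
          = (N + 1 + r).choose r + (N + (r + 1)).choose (r + 1) := by
        rw [show N + 1 + (r + 1) = (N + (r + 1)) + 1 by ring, Nat.choose_succ_succ']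
        congr 2
        omega
      rw [hch]
      push_cast
      ring
    · rw [if_neg (by rwa [hsingle])]
      simp only [Sser, coeff_eq, if_pos hsupp]
      have h0 : e 1 = 0 := by omega
      rw [h0]
      simp
  · simp only [Sser, coeff_eq, if_neg hsupp, if_neg (sub_support' e 1 hsupp), one_mul, mul_zero,
      zero_sub, neg_zero, sub_zero]
    split <;> simp

lemma one_sub_X_mul_Sser_zero :
    (1 - MvPowerSeries.X 1 : MvPowerSeries ℕ ℂ) * Sser 0 = 1 := by
  classical
  apply MvPowerSeries.ext
  intro e
  rw [sub_mul, one_mul, map_sub, MvPowerSeries.X, MvPowerSeries.coeff_monomial_mul,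
    MvPowerSeries.coeff_one]
  simp only [coeff_eq, Sser, Nat.zero_add, Nat.choose_self, Nat.cast_one]
  by_cases hsupp : ∀ i ∈ e.support, i = 1
  · by_cases hr : 1 ≤ e 1
    · have hne : e ≠ 0 := by
        intro h0
        rw [h0] at hr
        simp at hr
      rw [if_pos hsupp, if_pos (Finsupp.single_le_iff.mpr hr), one_mul,
        if_pos (by
          intro i hi
          apply hsupp
          rw [Finsupp.mem_support_iff] at hi ⊢
          intro h0; apply hi; rw [Finsupp.tsub_apply, h0]; simp),
        if_neg hne]
      ring
    · have he : e = 0 := by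
        ext i
        by_cases hi : i ∈ e.support
        · have h1 := hsupp i hi
          subst h1
          simp only [Finsupp.coe_zero, Pi.zero_apply]
          omega
        · simpa using hi
      subst he
      simp
  · have hne : e ≠ 0 := by
      rintro rfl
      simp at hsupp
    rw [if_neg hsupp, if_neg hne, zero_sub, neg_eq_zero]
    split
    · rw [if_neg (sub_support' e 1 hsupp), mul_zero]
    · rfl

lemma constCoeff_one_sub_X :
    MvPowerSeries.constantCoeff (1 - MvPowerSeries.X 1 : MvPowerSeries ℕ ℂ) ≠ 0 := by simp

lemma one_sub_X_mul_inv :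
    (1 - MvPowerSeries.X 1 : MvPowerSeries ℕ ℂ) * (1 - MvPowerSeries.X 1)⁻¹ = 1 :=
  MvPowerSeries.mul_inv_cancel _ constCoeff_one_sub_X

lemma isUnit_one_sub_X : IsUnit (1 - MvPowerSeries.X 1 : MvPowerSeries ℕ ℂ) :=
  IsUnit.of_mul_eq_one _ one_sub_X_mul_inv

lemma Sser_eq_pow (N : ℕ) :
    Sser N = ((1 - MvPowerSeries.X 1 : MvPowerSeries ℕ ℂ)⁻¹) ^ (N + 1) := by
  induction N with
  | zero =>
    apply isUnit_one_sub_X.mul_left_cancel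
    rw [one_sub_X_mul_Sser_zero, pow_one, one_sub_X_mul_inv]
  | succ N ih =>
    apply isUnit_one_sub_X.mul_left_cancel
    rw [one_sub_X_mul_Sser N, ih,
      show ((1 - MvPowerSeries.X 1 : MvPowerSeries ℕ ℂ)⁻¹) ^ (N + 1 + 1)
        = (1 - MvPowerSeries.X 1 : MvPowerSeries ℕ ℂ)⁻¹ * ((1 - MvPowerSeries.X 1)⁻¹) ^ (N + 1)
        from pow_succ' _ _,
      ← mul_assoc, one_sub_X_mul_inv, one_mul]

lemma tmon_eq (μ : Multiset ℕ) :
    tmon μ = MvPowerSeries.monomial ((μ.map fun i => i + 1).toFinsupp) 1 := by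
  classical
  induction μ using Multiset.induction_on with
  | empty => simp [tmon]
  | cons a μ ih =>
    rw [tmon, Multiset.map_cons, Multiset.prod_cons, ← tmon, ih, MvPowerSeries.X,
      MvPowerSeries.monomial_mul_monomial, one_mul, Multiset.map_cons, ← Multiset.singleton_add,
      Multiset.toFinsupp_add, Multiset.toFinsupp_singleton]

open scoped Classical in
lemma term_coeff (ν : Multiset ℕ) (N : ℕ) (e : ℕ →₀ ℕ) :
    MvPowerSeries.coeff e
        (tmon ν * ((1 - MvPowerSeries.X 1 : MvPowerSeries ℕ ℂ)⁻¹) ^ (N + 1)) =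
      if (ν.map fun i => i + 1).toFinsupp ≤ e ∧
          (∀ i ∈ (e - (ν.map fun i => i + 1).toFinsupp).support, i = 1) then
        ((N + (e - (ν.map fun i => i + 1).toFinsupp : ℕ →₀ ℕ) 1).choose
          ((e - (ν.map fun i => i + 1).toFinsupp : ℕ →₀ ℕ) 1) : ℂ)
      else 0 := by
  rw [tmon_eq, ← Sser_eq_pow, MvPowerSeries.coeff_monomial_mul]
  by_cases h1 : (ν.map fun i => i + 1).toFinsupp ≤ e
  · rw [if_pos h1, one_mul]
    show Sser N _ = _
    rw [Sser]
    by_cases h2 : ∀ i ∈ (e - (ν.map fun i => i + 1).toFinsupp).support, i = 1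
    · rw [if_pos h2, if_pos ⟨h1, h2⟩]
    · rw [if_neg h2, if_neg (fun h => h2 h.2)]
  · rw [if_neg h1, if_neg (fun h => h1 h.1)]

lemma pd_iterate (m : ℕ) (f : MvPowerSeries ℕ ℂ) (e : ℕ →₀ ℕ) :
    ((pd 0)^[m] f) e =
      (∏ j ∈ Finset.range m, ((e 0 + j + 1 : ℕ) : ℂ)) * f (e + Finsupp.single 0 m) := by
  induction m generalizing f e with
  | zero => simp
  | succ m ih =>
    rw [Function.iterate_succ_apply, ih]
    have h1 : (pd 0 f) (e + Finsupp.single 0 m)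
        = ((e 0 + m + 1 : ℕ) : ℂ) * f (e + Finsupp.single 0 (m + 1)) := by
      simp only [pd, MvPowerSeries.coeff, Finsupp.add_apply, Finsupp.single_eq_same]
      push_cast
      show _ * f ((e + Finsupp.single 0 m) + Finsupp.single 0 1) = _
      have h2 : (Finsupp.single 0 m + Finsupp.single 0 1 : ℕ →₀ ℕ) = Finsupp.single 0 (m+1) := by
        ext j; simp [Finsupp.single_apply]
      rw [add_assoc e, h2]
    rw [h1, Finset.prod_range_succ]
    ring

lemma ssum_add (e d : ℕ →₀ ℕ) :
    ((e + d).sum fun _ n => n) = (e.sum fun _ n => n) + (d.sum fun _ n => n) :=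
  Finsupp.sum_add_index' (fun _ => rfl) (fun _ _ _ => rfl)

lemma wsum_add (e d : ℕ →₀ ℕ) :
    ((e + d).sum fun i n => i * n) = (e.sum fun i n => i * n) + (d.sum fun i n => i * n) :=
  Finsupp.sum_add_index' (fun i => mul_zero i) (fun i m n => mul_add i m n)

lemma ssum_single (i n : ℕ) : ((Finsupp.single i n).sum fun _ n => n) = n :=
  Finsupp.sum_single_index rfl

lemma wsum_single (i n : ℕ) : ((Finsupp.single i n).sum fun i n => i * n) = i * n :=
  Finsupp.sum_single_index (mul_zero i)

lemma prod_range_fact (m : ℕ) : ∏ j ∈ Finset.range m, (j + 1) = m.factorial := by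
  induction m with
  | zero => simp
  | succ k ih => rw [Finset.prod_range_succ, ih, Nat.factorial_succ]; ring

lemma vs_coeff (m : ℕ) (hm : 1 ≤ m) (e : ℕ →₀ ℕ) :
    vs m e =
      if e 0 = 0 ∧ (e.sum fun i n => i * n) + 1 = m + (e.sum fun _ n => n) then
        ((m + (e.sum fun _ n => n) - 1).factorial : ℂ) /
          (e.prod fun i n => ((n.factorial : ℂ) * (i.factorial : ℂ) ^ n))
      else 0 := by
  classical
  rw [vs, setZero]
  by_cases h0 : e 0 = 0
  · rw [if_pos h0]
    show ((pd 0)^[m] vtop) e = _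
    rw [pd_iterate]
    have hprod : (∏ j ∈ Finset.range m, ((e 0 + j + 1 : ℕ) : ℂ)) = (m.factorial : ℂ) := by
      simp only [h0, Nat.zero_add]
      rw [← Nat.cast_prod, prod_range_fact]
    rw [hprod, vtop]
    have hS : ((e + Finsupp.single 0 m).sum fun _ n => n) = (e.sum fun _ n => n) + m := by
      rw [ssum_add, ssum_single]
    have hW : ((e + Finsupp.single 0 m).sum fun i n => i * n) = (e.sum fun i n => i * n) := by
      rw [wsum_add, wsum_single, Nat.zero_mul, Nat.add_zero]
    rw [hS, hW]
    have hdisj : Disjoint e.support (Finsupp.single (0:ℕ) m).support := by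
      rw [Finset.disjoint_left]
      intro i hi hsi
      have h1 : i = 0 := by
        have h2 := Finsupp.support_single_subset hsi
        simpa using h2
      subst h1
      exact (Finsupp.mem_support_iff.mp hi) h0
    have hprod2 : ((e + Finsupp.single 0 m).prod
          fun i n => ((n.factorial : ℂ) * (i.factorial : ℂ) ^ n))
        = (e.prod fun i n => ((n.factorial : ℂ) * (i.factorial : ℂ) ^ n)) * (m.factorial : ℂ) := by
      rw [Finsupp.prod_add_index_of_disjoint hdisj]
      congr 1
      rw [Finsupp.prod_single_index (by simp)]
      simp
    rw [hprod2]
    have hP : (e.prod fun i n => ((n.factorial : ℂ) * (i.factorial : ℂ) ^ n)) ≠ 0 := by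
      rw [Finsupp.prod]
      apply Finset.prod_ne_zero_iff.mpr
      intro i _
      apply mul_ne_zero
      · exact_mod_cast Nat.cast_ne_zero.mpr (Nat.factorial_ne_zero _)
      · apply pow_ne_zero
        exact_mod_cast Nat.cast_ne_zero.mpr (Nat.factorial_ne_zero _)
    by_cases hc : (e.sum fun i n => i * n) + 1 = m + (e.sum fun _ n => n)
    · rw [if_pos (show (1 ≤ (e.sum fun _ n => n) + m ∧
          (e.sum fun i n => i * n) + 1 = (e.sum fun _ n => n) + m) from ⟨by omega, by omega⟩),
        if_pos ⟨h0, hc⟩]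
      have h1 : (e.sum fun _ n => n) + m - 1 = m + (e.sum fun _ n => n) - 1 := by omega
      rw [h1]
      have hm0 : (m.factorial : ℂ) ≠ 0 := Nat.cast_ne_zero.mpr (Nat.factorial_ne_zero m)
      rw [mul_div_assoc', div_eq_div_iff (mul_ne_zero hP hm0) hP]
      ring
    · rw [if_neg (show ¬(1 ≤ (e.sum fun _ n => n) + m ∧
          (e.sum fun i n => i * n) + 1 = (e.sum fun _ n => n) + m) from fun h => hc (by omega)),
        if_neg (fun h => hc h.2), mul_zero]
  · rw [if_neg h0, if_neg (fun h => h0 h.1)]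

lemma map_add_one_sum (ν : Multiset ℕ) :
    (ν.map fun i => i + 1).sum = ν.sum + Multiset.card ν := by
  induction ν using Multiset.induction_on with
  | empty => simp
  | cons a ν ih => simp [ih]; ring

lemma wsum_toFinsupp (M : Multiset ℕ) :
    (M.toFinsupp.sum fun i n => i * n) = M.sum := by
  classical
  induction M using Multiset.induction_on with
  | empty => simp
  | cons a M ih =>
    rw [← Multiset.singleton_add, Multiset.toFinsupp_add,
      Finsupp.sum_add_index' (fun i => mul_zero i) (fun i m n => mul_add i m n),
      Multiset.toFinsupp_singleton, Finsupp.sum_single_index (mul_zero a), ih, Multiset.sum_add]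
    simp

lemma ssum_toFinsupp (M : Multiset ℕ) :
    (M.toFinsupp.sum fun _ n => n) = Multiset.card M := by
  classical
  induction M using Multiset.induction_on with
  | empty => simp
  | cons a M ih =>
    rw [← Multiset.singleton_add, Multiset.toFinsupp_add,
      Finsupp.sum_add_index' (fun _ => rfl) (fun _ _ _ => rfl),
      Multiset.toFinsupp_singleton, Finsupp.sum_single_index rfl, ih, Multiset.card_add]
    simp

lemma count_one_D (ν : Multiset ℕ) (hpos : ∀ i ∈ ν, 0 < i) :
    (ν.map fun i => i + 1).toFinsupp 1 = 0 := by
  classical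
  rw [Multiset.toFinsupp_apply, Multiset.count_eq_zero]
  intro h
  obtain ⟨j, hj, hj1⟩ := Multiset.mem_map.mp h
  have := hpos j hj
  omega

lemma count_zero_D (ν : Multiset ℕ) :
    (ν.map fun i => i + 1).toFinsupp 0 = 0 := by
  classical
  rw [Multiset.toFinsupp_apply, Multiset.count_eq_zero]
  intro h
  obtain ⟨j, hj, hj1⟩ := Multiset.mem_map.mp h
  omega

lemma D_prod (ν : Multiset ℕ) :
    ((ν.map fun i => i + 1).toFinsupp.prod
        fun i n => ((n.factorial : ℂ) * (i.factorial : ℂ) ^ n)) =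
      ((mFact ν : ℚ) : ℂ) * (ν.map fun j => (((j + 1).factorial : ℕ) : ℂ)).prod := by
  classical
  have hinj : Function.Injective (fun i : ℕ => i + 1) := add_left_injective 1
  rw [Finsupp.prod]
  rw [show ((ν.map fun i => i + 1).toFinsupp).support = (ν.map fun i => i + 1).toFinset from rfl,
    Multiset.toFinset_map]
  rw [Finset.prod_image (fun a _ b _ h => hinj h)]
  have hc : ∀ j, ((ν.map fun i => i + 1).toFinsupp) (j + 1) = ν.count j := by
    intro j
    rw [Multiset.toFinsupp_apply, Multiset.count_map_eq_count' _ _ hinj]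
  simp only [hc]
  rw [Finset.prod_mul_distrib]
  congr 1
  · rw [mFact]
    push_cast
    rfl
  · rw [Finset.prod_multiset_map_count]

-- ===== end auxiliary lemmas =====
set_option maxHeartbeats 1000000

/-- For `m ≥ 1`,
`v^s_m = Σ_{μ ∈ Y_{m-1}} ((m-1+ℓ(μ))!/∏_j (j+1)!^{m_j(μ)}) t_{μ+1}/(m(μ)! (1-t_1)^{m+ℓ(μ)})`. -/
theorem vs_formula (m : ℕ) (hm : 1 ≤ m) :
    vs m =
      ∑ μ : Nat.Partition (m - 1),
        (((((m - 1 + Multiset.card μ.parts).factorial : ℚ) /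
            (mFact μ.parts * (μ.parts.map fun j => ((j + 1).factorial : ℚ)).prod) : ℚ)) : ℂ) •
          (tmon μ.parts *
            ((1 - MvPowerSeries.X 1 : MvPowerSeries ℕ ℂ)⁻¹) ^ (m + Multiset.card μ.parts)) := by
  classical
  obtain ⟨m', rfl⟩ : ∃ m', m = m' + 1 := ⟨m - 1, by omega⟩
  funext e
  have key : ∀ μ : Nat.Partition (m' + 1 - 1),
      (tmon μ.parts * ((1 - MvPowerSeries.X 1 : MvPowerSeries ℕ ℂ)⁻¹) ^
          (m' + 1 + Multiset.card μ.parts)) e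
        = if (μ.parts.map fun i => i + 1).toFinsupp ≤ e ∧
              (∀ i ∈ (e - (μ.parts.map fun i => i + 1).toFinsupp).support, i = 1) then
            (((m' + Multiset.card μ.parts) +
                (e - (μ.parts.map fun i => i + 1).toFinsupp : ℕ →₀ ℕ) 1).choose
              ((e - (μ.parts.map fun i => i + 1).toFinsupp : ℕ →₀ ℕ) 1) : ℂ)
          else 0 := by
    intro μ
    rw [show m' + 1 + Multiset.card μ.parts = (m' + Multiset.card μ.parts) + 1 by omega]
    exact term_coeff μ.parts (m' + Multiset.card μ.parts) e
  have hsumapp : ∀ (s : Finset (Nat.Partition (m' + 1 - 1))) (g : Nat.Partition (m' + 1 - 1) → MvPowerSeries ℕ ℂ),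
      (∑ μ ∈ s, g μ) e = ∑ μ ∈ s, g μ e := fun s g => map_sum (MvPowerSeries.coeff e) g s
  rw [vs_coeff (m' + 1) (by omega) e, hsumapp]
  have hsmul : ∀ (c : ℂ) (F : MvPowerSeries ℕ ℂ), (c • F) e = c * F e := fun c F => rfl
  simp only [hsmul, key]
  have heas : Finsupp.erase 1 e + Finsupp.single 1 (e 1) = e := Finsupp.erase_add_single 1 e
  have hWe : (e.sum fun i n => i * n) = ((Finsupp.erase 1 e).sum fun i n => i * n) + e 1 := by
    conv_lhs => rw [← heas]
    rw [wsum_add, wsum_single, one_mul]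
  have hSe : (e.sum fun _ n => n) = ((Finsupp.erase 1 e).sum fun _ n => n) + e 1 := by
    conv_lhs => rw [← heas]
    rw [ssum_add, ssum_single]
  have hforce : ∀ μ : Nat.Partition (m' + 1 - 1),
      ((μ.parts.map fun i => i + 1).toFinsupp ≤ e ∧
        (∀ i ∈ (e - (μ.parts.map fun i => i + 1).toFinsupp).support, i = 1)) →
      (μ.parts.map fun i => i + 1).toFinsupp = Finsupp.erase 1 e := by
    rintro μ ⟨h1, h2⟩
    ext i
    by_cases hi : i = 1
    · subst hi
      rw [Finsupp.erase_same, count_one_D μ.parts (fun _ hj => μ.parts_pos hj)]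
    · rw [Finsupp.erase_ne hi]
      have h3 : (e - (μ.parts.map fun i => i + 1).toFinsupp : ℕ →₀ ℕ) i = 0 := by
        by_contra h4
        exact hi (h2 i (Finsupp.mem_support_iff.mpr h4))
      rw [Finsupp.tsub_apply] at h3
      have h5 := (Finsupp.le_def.mp h1) i
      omega
  have hWD : ∀ μ : Nat.Partition (m' + 1 - 1),
      (((μ.parts.map fun i => i + 1).toFinsupp).sum fun i n => i * n)
        = m' + Multiset.card μ.parts := by
    intro μ
    rw [wsum_toFinsupp, map_add_one_sum, μ.parts_sum]
    omega
  have hSD : ∀ μ : Nat.Partition (m' + 1 - 1),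
      (((μ.parts.map fun i => i + 1).toFinsupp).sum fun _ n => n)
        = Multiset.card μ.parts := by
    intro μ
    rw [ssum_toFinsupp, Multiset.card_map]
  by_cases hv : e 0 = 0 ∧ (e.sum fun i n => i * n) + 1 = (m' + 1) + (e.sum fun _ n => n)
  · rw [if_pos hv]
    set M : Multiset ℕ := Finsupp.toMultiset (Finsupp.erase 1 e) with hM
    have hMmem : ∀ i ∈ M, 2 ≤ i := by
      intro i hi
      rw [hM, Finsupp.mem_toMultiset, Finsupp.mem_support_iff] at hi
      by_contra h
      have h2 : i = 0 ∨ i = 1 := by omega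
      rcases h2 with h2 | h2
      · subst h2
        rw [Finsupp.erase_ne (by norm_num), hv.1] at hi
        exact hi rfl
      · subst h2
        rw [Finsupp.erase_same] at hi
        exact hi rfl
    have hmapM : ((M.map fun i => i - 1).map fun i => i + 1) = M := by
      rw [Multiset.map_map]
      rw [show ((fun i => i + 1) ∘ fun i : ℕ => i - 1) = fun i : ℕ => i - 1 + 1 from rfl]
      calc M.map (fun i : ℕ => i - 1 + 1) = M.map id := by
            apply Multiset.map_congr rfl
            intro i hi
            have := hMmem i hi
            simp only [id_eq]
            omega
        _ = M := Multiset.map_id M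
    have hMfin : M.toFinsupp = Finsupp.erase 1 e := by
      rw [hM, Finsupp.toMultiset_toFinsupp]
    have hMsum : M.sum = ((Finsupp.erase 1 e).sum fun i n => i * n) := by
      rw [← hMfin, wsum_toFinsupp]
    have hMcard : Multiset.card M = ((Finsupp.erase 1 e).sum fun _ n => n) := by
      rw [← hMfin, ssum_toFinsupp]
    have hsum₀ : (M.map fun i => i - 1).sum = m' + 1 - 1 := by
      have h1 := map_add_one_sum (M.map fun i => i - 1)
      rw [hmapM, Multiset.card_map] at h1
      have h2 := hv.2
      omega
    set μ₀ : Nat.Partition (m' + 1 - 1) :=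
      ⟨M.map fun i => i - 1, fun {j} hj => by
          obtain ⟨i, hi, hij⟩ := Multiset.mem_map.mp hj
          have := hMmem i hi
          omega, hsum₀⟩ with hμ₀
    have hD₀ : (μ₀.parts.map fun i => i + 1).toFinsupp = Finsupp.erase 1 e := by
      show ((M.map fun i => i - 1).map fun i => i + 1).toFinsupp = _
      rw [hmapM, hMfin]
    have hsub₀ : e - (μ₀.parts.map fun i => i + 1).toFinsupp = Finsupp.single 1 (e 1) := by
      rw [hD₀]
      have h := add_tsub_cancel_left (Finsupp.erase 1 e) (Finsupp.single 1 (e 1))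
      rwa [heas] at h
    have hcond₀ : (μ₀.parts.map fun i => i + 1).toFinsupp ≤ e ∧
        (∀ i ∈ (e - (μ₀.parts.map fun i => i + 1).toFinsupp).support, i = 1) := by
      constructor
      · rw [hD₀]
        conv_rhs => rw [← heas]
        exact le_add_right le_rfl
      · rw [hsub₀]
        intro i hi
        simpa using Finsupp.support_single_subset hi
    rw [Finset.sum_eq_single_of_mem μ₀ (Finset.mem_univ _) ?other]
    case other =>
      intro μ _ hne
      rw [if_neg, mul_zero]
      intro hcond
      apply hne
      apply Nat.Partition.ext
      have h2 : (μ.parts.map fun i => i + 1) = (μ₀.parts.map fun i => i + 1) :=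
        Multiset.toFinsupp.injective ((hforce μ hcond).trans hD₀.symm)
      exact Multiset.map_injective (add_left_injective 1) h2
    rw [if_pos hcond₀, hsub₀, Finsupp.single_eq_same]
    have hL : Multiset.card μ₀.parts = Multiset.card M := Multiset.card_map _ _
    have hSeval : (e.sum fun _ n => n) = Multiset.card μ₀.parts + e 1 := by
      rw [hSe, hL, hMcard]
    have hdisj : Disjoint (Finsupp.erase 1 e).support (Finsupp.single (1:ℕ) (e 1)).support := by
      rw [Finset.disjoint_left]
      intro i hi hsi
      have h1 : i = 1 := by
        have h2 := Finsupp.support_single_subset hsi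
        simpa using h2
      subst h1
      rw [Finsupp.support_erase] at hi
      exact (Finset.notMem_erase 1 _) hi
    have hprod : (e.prod fun i n => ((n.factorial : ℂ) * (i.factorial : ℂ) ^ n))
        = (((mFact μ₀.parts : ℚ) : ℂ) *
            (μ₀.parts.map fun j => (((j + 1).factorial : ℕ) : ℂ)).prod) *
          ((e 1).factorial : ℂ) := by
      conv_lhs => rw [← heas]
      rw [Finsupp.prod_add_index_of_disjoint hdisj]
      congr 1
      · rw [← hD₀, D_prod]
      · rw [Finsupp.prod_single_index (by simp)]
        simp
    rw [hprod]
    have hcastP : (((μ₀.parts.map fun j => ((j + 1).factorial : ℚ)).prod : ℚ) : ℂ)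
        = (μ₀.parts.map fun j => (((j + 1).factorial : ℕ) : ℂ)).prod := by
      rw [show (((μ₀.parts.map fun j => ((j + 1).factorial : ℚ)).prod : ℚ) : ℂ)
          = (Rat.castHom ℂ) ((μ₀.parts.map fun j => ((j + 1).factorial : ℚ)).prod) from rfl,
        map_multiset_prod]
      refine congrArg Multiset.prod ?_
      rw [Multiset.map_map]
      apply Multiset.map_congr rfl
      intro j _
      simp
    have hA : ((mFact μ₀.parts : ℚ) : ℂ) ≠ 0 := by
      rw [Rat.cast_ne_zero]
      apply ne_of_gt
      apply Finset.prod_pos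
      intro j _
      exact_mod_cast Nat.factorial_pos _
    have hB : (μ₀.parts.map fun j => (((j + 1).factorial : ℕ) : ℂ)).prod ≠ 0 := by
      apply Multiset.prod_ne_zero
      intro h
      obtain ⟨j, _, hj⟩ := Multiset.mem_map.mp h
      exact Nat.cast_ne_zero.mpr (Nat.factorial_ne_zero _) hj
    have hr : ((e 1).factorial : ℂ) ≠ 0 := Nat.cast_ne_zero.mpr (Nat.factorial_ne_zero _)
    have hidx : m' + 1 + (e.sum fun _ n => n) - 1 = m' + Multiset.card μ₀.parts + e 1 := by
      rw [hSeval]; omega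
    rw [hidx]
    have hkeyN := Nat.add_choose_mul_factorial_mul_factorial
      (m' + Multiset.card μ₀.parts) (e 1)
    have hfinal : ((m' + Multiset.card μ₀.parts + e 1).factorial : ℂ) /
          ((((mFact μ₀.parts : ℚ) : ℂ) *
            (μ₀.parts.map fun j => (((j + 1).factorial : ℕ) : ℂ)).prod) * ((e 1).factorial : ℂ))
        = (((((m' + Multiset.card μ₀.parts).factorial : ℚ) /
            (mFact μ₀.parts * (μ₀.parts.map fun j => ((j + 1).factorial : ℚ)).prod) : ℚ)) : ℂ) *
          ((m' + Multiset.card μ₀.parts + e 1).choose (e 1) : ℂ) := by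
      have hkey : ((m' + Multiset.card μ₀.parts + e 1).factorial : ℂ)
          = ((m' + Multiset.card μ₀.parts + e 1).choose (e 1) : ℂ) * ((e 1).factorial : ℂ) *
            ((m' + Multiset.card μ₀.parts).factorial : ℂ) := by
        rw [← hkeyN]
        push_cast
        ring
      rw [hkey, Rat.cast_div, Rat.cast_mul, Rat.cast_natCast, hcastP, div_mul_eq_mul_div,
        div_eq_div_iff (mul_ne_zero (mul_ne_zero hA hB) hr) (mul_ne_zero hA hB)]
      ring
    exact hfinal
  · rw [if_neg hv]
    symm
    apply Finset.sum_eq_zero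
    intro μ _
    by_cases hcond : (μ.parts.map fun i => i + 1).toFinsupp ≤ e ∧
        (∀ i ∈ (e - (μ.parts.map fun i => i + 1).toFinsupp).support, i = 1)
    · exfalso
      have hD := hforce μ hcond
      apply hv
      constructor
      · have h1 := count_zero_D μ.parts
        rw [hD, Finsupp.erase_ne (by norm_num)] at h1
        exact h1
      · have h1 : ((Finsupp.erase 1 e).sum fun i n => i * n) = m' + Multiset.card μ.parts := by
          rw [← hD, hWD]
        have h2 : ((Finsupp.erase 1 e).sum fun _ n => n) = Multiset.card μ.parts := by
          rw [← hD, hSD]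
        omega
    · rw [if_neg hcond, mul_zero]
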